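/- arXiv:2506.00017 — 2 statements merged into one kernel-verified Lean document; each statement's English description precedes it below -/
import Mathlib

section
/- Let α > 0 and β > 0, and let f : ℝ → ℝ be continuous on [0, ∞). Then for every t ≥ 0, J^α(J^β f)(t) = J^{α+β} f(t); that is, (1/Γ(α)) ∫_0^t (t-s)^{α-1} ((1/Γ(β)) ∫_0^s (s-u)^{β-1} f(u) du) ds = (1/Γ(α+β)) ∫_0^t (t-s)^{α+β-1} f(s) ds. -/
open MeasureTheory Set

/-- The Riemann–Liouville fractional integral of order `α`:
`(J^α f)(t) = (1/Γ(α)) ∫_0^t (t-s)^(α-1) f(s) ds`. -/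
noncomputable def riemannLiouville (α : ℝ) (f : ℝ → ℝ) (t : ℝ) : ℝ :=
  (1 / Real.Gamma α) * ∫ s in (0:ℝ)..t, (t - s) ^ (α - 1) * f s

lemma rl_beta {a b : ℝ} (ha : 0 < a) (hb : 0 < b) :
    ∫ x in (0:ℝ)..1, x ^ (b - 1) * (1 - x) ^ (a - 1) =
      Real.Gamma a * Real.Gamma b / Real.Gamma (a + b) := by
  have hc := Complex.Gamma_mul_Gamma_eq_betaIntegral (s := (b:ℂ)) (t := (a:ℂ))
    (by simpa using hb) (by simpa using ha)
  have hbeta : Complex.betaIntegral (b:ℂ) (a:ℂ) =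
      ((∫ x in (0:ℝ)..1, x ^ (b - 1) * (1 - x) ^ (a - 1) : ℝ) : ℂ) := by
    rw [Complex.betaIntegral, ← intervalIntegral.integral_ofReal]
    refine intervalIntegral.integral_congr fun x hx => ?_
    rw [Set.uIcc_of_le (by norm_num : (0:ℝ) ≤ 1)] at hx
    rw [show ((b:ℂ) - 1) = ((b - 1 : ℝ) : ℂ) by push_cast; ring,
      show ((a:ℂ) - 1) = ((a - 1 : ℝ) : ℂ) by push_cast; ring,
      show (1 - (x:ℂ)) = ((1 - x : ℝ) : ℂ) by push_cast; ring,
      ← Complex.ofReal_cpow hx.1, ← Complex.ofReal_cpow (by linarith [hx.2] : (0:ℝ) ≤ 1 - x)]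
    push_cast; ring
  rw [hbeta, show ((b:ℂ) + (a:ℂ)) = ((a + b : ℝ) : ℂ) by push_cast; ring,
    Complex.Gamma_ofReal, Complex.Gamma_ofReal, Complex.Gamma_ofReal,
    ← Complex.ofReal_mul, ← Complex.ofReal_mul] at hc
  have h2 := Complex.ofReal_injective hc
  have hΓab : Real.Gamma (a + b) ≠ 0 := (Real.Gamma_pos_of_pos (by linarith)).ne'
  field_simp
  linarith [h2]

lemma rl_inner {α β u t : ℝ} (hα : 0 < α) (hβ : 0 < β) (hut : u < t) :
    ∫ s in u..t, (t - s) ^ (α - 1) * (s - u) ^ (β - 1) =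
      (t - u) ^ (α + β - 1) * (Real.Gamma α * Real.Gamma β / Real.Gamma (α + β)) := by
  set c := t - u with hc
  have hc0 : 0 < c := by simp [hc]; linarith
  have hsub := intervalIntegral.integral_comp_mul_add
    (f := fun s => (t - s) ^ (α - 1) * (s - u) ^ (β - 1)) (a := 0) (b := 1) hc0.ne' u
  simp only [mul_zero, zero_add, mul_one] at hsub
  have hcu : c * 1 + u = t := by rw [hc]; ring
  rw [show c + u = t by rw [hc]; ring] at hsub
  have hval : ∫ x in (0:ℝ)..1, (t - (c * x + u)) ^ (α - 1) * (c * x + u - u) ^ (β - 1)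
      = c ^ (α + β - 2) * (Real.Gamma α * Real.Gamma β / Real.Gamma (α + β)) := by
    have : ∀ x ∈ Set.uIcc (0:ℝ) 1,
        (t - (c * x + u)) ^ (α - 1) * (c * x + u - u) ^ (β - 1)
          = c ^ (α + β - 2) * (x ^ (β - 1) * (1 - x) ^ (α - 1)) := by
      intro x hx
      rw [Set.uIcc_of_le (by norm_num : (0:ℝ) ≤ 1)] at hx
      have h1 : t - (c * x + u) = c * (1 - x) := by rw [hc]; ring
      have h2 : c * x + u - u = c * x := by ring
      have hcc : c ^ (α - 1) * c ^ (β - 1) = c ^ (α + β - 2) := by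
        rw [← Real.rpow_add hc0]
        congr 1
        ring
      rw [h1, h2, Real.mul_rpow hc0.le (by linarith [hx.2]), Real.mul_rpow hc0.le hx.1]
      linear_combination ((1 - x) ^ (α - 1) * x ^ (β - 1)) * hcc
    rw [intervalIntegral.integral_congr this, intervalIntegral.integral_const_mul,
      rl_beta hα hβ]
  rw [hval, smul_eq_mul] at hsub
  have h3 : (∫ (x : ℝ) in u..t, (t - x) ^ (α - 1) * (x - u) ^ (β - 1))
      = c * (c ^ (α + β - 2) * (Real.Gamma α * Real.Gamma β / Real.Gamma (α + β))) := by
    rw [hsub, ← mul_assoc, mul_inv_cancel₀ hc0.ne', one_mul]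
  have h4 : c * c ^ (α + β - 2) = c ^ (α + β - 1) := by
    rw [show α + β - 1 = 1 + (α + β - 2) by ring, Real.rpow_add hc0, Real.rpow_one]
  rw [h3, ← mul_assoc, h4]

lemma rl_main (α β : ℝ) (hα : 0 < α) (hβ : 0 < β) (f : ℝ → ℝ) (hf : Continuous f)
    {t : ℝ} (ht : 0 ≤ t) :
    riemannLiouville α (riemannLiouville β f) t = riemannLiouville (α + β) f t := by
  rcases eq_or_lt_of_le ht with rfl | ht0
  · simp [riemannLiouville]
  set B := Real.Gamma α * Real.Gamma β / Real.Gamma (α + β) with hB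
  have hΓα := Real.Gamma_pos_of_pos hα
  have hΓβ := Real.Gamma_pos_of_pos hβ
  have hΓαβ := Real.Gamma_pos_of_pos (by linarith : (0:ℝ) < α + β)
  obtain ⟨M, hM⟩ := (isCompact_Icc (a := (0:ℝ)) (b := t)).exists_bound_of_continuousOn
    hf.continuousOn
  have hM0 : 0 ≤ M := le_trans (norm_nonneg (f 0)) (hM 0 ⟨le_refl _, ht⟩)
  set μ := volume.restrict (Ioc (0:ℝ) t) with hμ
  set F : ℝ × ℝ → ℝ := fun p =>
    Set.indicator {q : ℝ × ℝ | q.2 < q.1}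
      (fun q => (t - q.1) ^ (α - 1) * ((q.1 - q.2) ^ (β - 1) * f q.2)) p with hFdef
  have hFmeas : Measurable F := by
    apply Measurable.indicator
    · fun_prop
    · exact measurableSet_lt measurable_snd measurable_fst
  -- value of the basic rpow integral
  have hval : ∀ s : ℝ, 0 ≤ s → (∫ u in (0:ℝ)..s, (s - u) ^ (β - 1)) = s ^ β / β := by
    intro s hs
    rw [intervalIntegral.integral_comp_sub_left (fun x => x ^ (β - 1)) s, sub_self, sub_zero,
      integral_rpow (Or.inl (by linarith))]
    rw [show β - 1 + 1 = β by ring, Real.zero_rpow hβ.ne']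
    ring
  -- interval integrability of the β-kernel
  have hker : ∀ s : ℝ, IntervalIntegrable (fun u => (s - u) ^ (β - 1)) volume 0 s := by
    intro s
    have := (intervalIntegral.intervalIntegrable_rpow' (a := 0) (b := s) (by linarith : (-1:ℝ) < β - 1)).comp_sub_left s
    simpa using this.symm
  have hkerα : IntervalIntegrable (fun s => (t - s) ^ (α - 1)) volume 0 t := by
    have := (intervalIntegral.intervalIntegrable_rpow' (a := 0) (b := t) (by linarith : (-1:ℝ) < α - 1)).comp_sub_left t
    simpa using this.symm
  -- sections of F
  have hsec : ∀ s : ℝ, (fun u => F (s, u)) =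
      Set.indicator (Iio s) (fun u => (t - s) ^ (α - 1) * ((s - u) ^ (β - 1) * f u)) := by
    intro s
    funext u
    simp only [hFdef]
    by_cases h : u < s
    · rw [Set.indicator_of_mem (by exact h : (s, u) ∈ {q : ℝ × ℝ | q.2 < q.1}),
        Set.indicator_of_mem (mem_Iio.mpr h)]
    · rw [Set.indicator_of_notMem (by exact h : (s, u) ∉ {q : ℝ × ℝ | q.2 < q.1}),
        Set.indicator_of_notMem (by simpa using h)]
  have hsec2 : ∀ u : ℝ, (fun s => F (s, u)) =
      Set.indicator (Ioi u) (fun s => ((t - s) ^ (α - 1) * (s - u) ^ (β - 1)) * f u) := by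
    intro u
    funext s
    simp only [hFdef]
    by_cases h : u < s
    · rw [Set.indicator_of_mem (by exact h : (s, u) ∈ {q : ℝ × ℝ | q.2 < q.1}),
        Set.indicator_of_mem (mem_Ioi.mpr h)]
      ring
    · rw [Set.indicator_of_notMem (by exact h : (s, u) ∉ {q : ℝ × ℝ | q.2 < q.1}),
        Set.indicator_of_notMem (by simpa using h)]
  -- (K1)
  have K1 : ∀ s ∈ Ioc (0:ℝ) t, (∫ u, F (s, u) ∂μ) =
      (t - s) ^ (α - 1) * ∫ u in (0:ℝ)..s, (s - u) ^ (β - 1) * f u := by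
    intro s hs
    rw [hsec s, hμ, integral_indicator measurableSet_Iio,
      Measure.restrict_restrict measurableSet_Iio,
      show Iio s ∩ Ioc 0 t = Ioo 0 s by
        ext x
        simp only [mem_inter_iff, mem_Iio, mem_Ioc, mem_Ioo]
        constructor
        · rintro ⟨h1, h2, _⟩; exact ⟨h2, h1⟩
        · rintro ⟨h1, h2⟩; exact ⟨h2, h1, by linarith [hs.2]⟩,
      ← integral_Ioc_eq_integral_Ioo, ← intervalIntegral.integral_of_le hs.1.le,
      intervalIntegral.integral_const_mul]
  -- (K2)
  have K2 : ∀ u ∈ Ioo (0:ℝ) t, (∫ s, F (s, u) ∂μ) =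
      ((t - u) ^ (α + β - 1) * B) * f u := by
    intro u hu
    rw [hsec2 u, hμ, integral_indicator measurableSet_Ioi,
      Measure.restrict_restrict measurableSet_Ioi,
      show Ioi u ∩ Ioc 0 t = Ioc u t by
        ext x
        simp only [mem_inter_iff, mem_Ioi, mem_Ioc]
        constructor
        · rintro ⟨h1, _, h3⟩; exact ⟨h1, h3⟩
        · rintro ⟨h1, h2⟩; exact ⟨h1, by linarith [hu.1], h2⟩,
      ← intervalIntegral.integral_of_le hu.2.le, intervalIntegral.integral_mul_const,
      rl_inner hα hβ hu.2]
  -- integrability of sections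
  have hsecInt : ∀ s : ℝ, Integrable (fun u => F (s, u)) μ := by
    intro s
    rw [hsec s, hμ, integrable_indicator_iff measurableSet_Iio]
    rw [IntegrableOn, Measure.restrict_restrict measurableSet_Iio]
    rcases le_or_gt s 0 with h | h
    · have : Iio s ∩ Ioc 0 t = ∅ := by
        ext x; simp only [mem_inter_iff, mem_Iio, mem_Ioc, mem_empty_iff_false, iff_false]
        rintro ⟨h1, h2, _⟩; linarith
      rw [this]; simp
    · have hsub : Iio s ∩ Ioc 0 t ⊆ Ioc 0 s := by
        rintro x ⟨h1, h2, _⟩; exact ⟨h2, le_of_lt h1⟩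
      have : IntegrableOn (fun u => (t - s) ^ (α - 1) * ((s - u) ^ (β - 1) * f u)) (Ioc 0 s)
          volume := by
        have h1 : IntervalIntegrable (fun u => (s - u) ^ (β - 1) * f u) volume 0 s :=
          (hker s).mul_continuousOn hf.continuousOn
        have h2 := h1.const_mul ((t - s) ^ (α - 1))
        rw [intervalIntegrable_iff_integrableOn_Ioc_of_le h.le] at h2
        exact h2
      exact this.mono_set hsub
  -- integrability of F
  have hFint : Integrable F (μ.prod μ) := by
    rw [integrable_prod_iff hFmeas.aestronglyMeasurable]
    refine ⟨Filter.Eventually.of_forall hsecInt, ?_⟩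
    set C := M * (t ^ β / β) with hC
    have hbnd : ∀ s ∈ Ioc (0:ℝ) t, (∫ u, ‖F (s, u)‖ ∂μ) ≤ (t - s) ^ (α - 1) * C := by
      intro s hs
      have hnorm : ∀ u, ‖F (s, u)‖ =
          Set.indicator (Iio s) (fun u => (t - s) ^ (α - 1) * ((s - u) ^ (β - 1) * ‖f u‖)) u := by
        intro u
        rw [show F (s, u) = ((Iio s).indicator
          fun u => (t - s) ^ (α - 1) * ((s - u) ^ (β - 1) * f u)) u from congrFun (hsec s) u]
        by_cases h : u ∈ Iio s
        · rw [Set.indicator_of_mem h, Set.indicator_of_mem h, norm_mul, norm_mul,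
            Real.norm_of_nonneg (Real.rpow_nonneg (by linarith [hs.2, mem_Iio.mp h]) _),
            Real.norm_of_nonneg (Real.rpow_nonneg (by linarith [mem_Iio.mp h]) _)]
        · rw [Set.indicator_of_notMem h, Set.indicator_of_notMem h, norm_zero]
      calc (∫ u, ‖F (s, u)‖ ∂μ)
          = ∫ u, Set.indicator (Iio s)
              (fun u => (t - s) ^ (α - 1) * ((s - u) ^ (β - 1) * ‖f u‖)) u ∂μ := by
            simp_rw [hnorm]
        _ = ∫ u in Ioo 0 s, (t - s) ^ (α - 1) * ((s - u) ^ (β - 1) * ‖f u‖) := by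
            rw [hμ, integral_indicator measurableSet_Iio,
              Measure.restrict_restrict measurableSet_Iio,
              show Iio s ∩ Ioc 0 t = Ioo 0 s by
                ext x
                simp only [mem_inter_iff, mem_Iio, mem_Ioc, mem_Ioo]
                constructor
                · rintro ⟨h1, h2, _⟩; exact ⟨h2, h1⟩
                · rintro ⟨h1, h2⟩; exact ⟨h2, h1, by linarith [hs.2]⟩]
        _ ≤ ∫ u in Ioo 0 s, (t - s) ^ (α - 1) * ((s - u) ^ (β - 1) * M) := by
            apply setIntegral_mono_on
            · have h1 : IntervalIntegrable (fun u => (s - u) ^ (β - 1) * ‖f u‖) volume 0 s :=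
                (hker s).mul_continuousOn hf.norm.continuousOn
              have h2 := h1.const_mul ((t - s) ^ (α - 1))
              rw [intervalIntegrable_iff_integrableOn_Ioc_of_le hs.1.le] at h2
              exact h2.mono_set Ioo_subset_Ioc_self
            · have h1 : IntervalIntegrable (fun u => (s - u) ^ (β - 1) * M) volume 0 s :=
                (hker s).mul_const M
              have h2 := h1.const_mul ((t - s) ^ (α - 1))
              rw [intervalIntegrable_iff_integrableOn_Ioc_of_le hs.1.le] at h2
              exact h2.mono_set Ioo_subset_Ioc_self
            · exact measurableSet_Ioo
            · intro u hu
              have h1 : (0:ℝ) ≤ (t - s) ^ (α - 1) := Real.rpow_nonneg (by linarith [hs.2]) _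
              have h2 : (0:ℝ) ≤ (s - u) ^ (β - 1) := Real.rpow_nonneg (by linarith [hu.2]) _
              have h3 : ‖f u‖ ≤ M := hM u ⟨hu.1.le, by linarith [hu.2, hs.2]⟩
              exact mul_le_mul_of_nonneg_left
                (mul_le_mul_of_nonneg_left h3 h2) h1
        _ = (t - s) ^ (α - 1) * (M * (s ^ β / β)) := by
            rw [← integral_Ioc_eq_integral_Ioo, ← intervalIntegral.integral_of_le hs.1.le,
              intervalIntegral.integral_const_mul]
            congr 1
            have : ∀ u, (s - u) ^ (β - 1) * M = M * (s - u) ^ (β - 1) := fun u => mul_comm _ _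
            simp_rw [this, intervalIntegral.integral_const_mul, hval s hs.1.le]
        _ ≤ (t - s) ^ (α - 1) * C := by
            apply mul_le_mul_of_nonneg_left _ (Real.rpow_nonneg (by linarith [hs.2]) _)
            rw [hC]
            apply mul_le_mul_of_nonneg_left _ hM0
            gcongr
            · exact hs.1.le
            · exact hs.2
    apply Integrable.mono' (g := fun s => (t - s) ^ (α - 1) * C)
    · have h2 := hkerα.mul_const C
      rw [intervalIntegrable_iff_integrableOn_Ioc_of_le ht] at h2
      exact h2
    · exact (hFmeas.norm.aestronglyMeasurable.integral_prod_right')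
    · rw [hμ]
      filter_upwards [ae_restrict_mem measurableSet_Ioc] with s hs
      rw [Real.norm_of_nonneg (integral_nonneg fun u => norm_nonneg _)]
      exact hbnd s hs
  -- now the computation
  have swap := MeasureTheory.integral_integral_swap (μ := μ) (ν := μ)
    (f := fun s u => F (s, u)) (by exact hFint)
  have lhs1 : (∫ s, (∫ u, F (s, u) ∂μ) ∂μ) =
      ∫ s in (0:ℝ)..t, (t - s) ^ (α - 1) * ∫ u in (0:ℝ)..s, (s - u) ^ (β - 1) * f u := by
    rw [intervalIntegral.integral_of_le ht, hμ]
    exact setIntegral_congr_fun measurableSet_Ioc K1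
  have rhs1 : (∫ u, (∫ s, F (s, u) ∂μ) ∂μ) =
      B * ∫ u in (0:ℝ)..t, (t - u) ^ (α + β - 1) * f u := by
    rw [hμ, integral_Ioc_eq_integral_Ioo,
      setIntegral_congr_fun measurableSet_Ioo K2,
      ← integral_Ioc_eq_integral_Ioo, ← intervalIntegral.integral_of_le ht]
    have : ∀ u, ((t - u) ^ (α + β - 1) * B) * f u = B * ((t - u) ^ (α + β - 1) * f u) :=
      fun u => by ring
    simp_rw [this, intervalIntegral.integral_const_mul]
  -- assemble
  simp only [riemannLiouville]
  have expand : (∫ s in (0:ℝ)..t, (t - s) ^ (α - 1) *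
        ((1 / Real.Gamma β) * ∫ u in (0:ℝ)..s, (s - u) ^ (β - 1) * f u)) =
      (1 / Real.Gamma β) * ∫ s in (0:ℝ)..t, (t - s) ^ (α - 1) *
        ∫ u in (0:ℝ)..s, (s - u) ^ (β - 1) * f u := by
    rw [← intervalIntegral.integral_const_mul]
    apply intervalIntegral.integral_congr
    intro s _
    ring
  rw [expand, ← lhs1, swap, rhs1]
  rw [hB]
  field_simp

theorem riemannLiouville_semigroup (α β : ℝ) (hα : 0 < α) (hβ : 0 < β)
    (f : ℝ → ℝ) (hf : ContinuousOn f (Set.Ici 0)) :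
    ∀ t : ℝ, 0 ≤ t →
      riemannLiouville α (riemannLiouville β f) t = riemannLiouville (α + β) f t := by
  intro t ht
  set g : ℝ → ℝ := fun x => f (max x 0) with hg
  have hgc : Continuous g :=
    hf.comp_continuous (continuous_id.max continuous_const) fun x => Set.mem_Ici.mpr (le_max_right _ _)
  have hfg : ∀ x, 0 ≤ x → f x = g x := fun x hx => by
    simp [hg, max_eq_left hx]
  have hII : ∀ s : ℝ, 0 ≤ s → (∫ u in (0:ℝ)..s, (s - u) ^ (β - 1) * f u)
      = ∫ u in (0:ℝ)..s, (s - u) ^ (β - 1) * g u := by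
    intro s hs
    apply intervalIntegral.integral_congr
    intro u hu
    rw [Set.uIcc_of_le hs] at hu
    dsimp only
    rw [hfg u hu.1]
  have houter : riemannLiouville α (riemannLiouville β f) t
      = riemannLiouville α (riemannLiouville β g) t := by
    simp only [riemannLiouville]
    congr 1
    apply intervalIntegral.integral_congr
    intro s hs
    rw [Set.uIcc_of_le ht] at hs
    dsimp only
    rw [hII s hs.1]
  have hrhs : riemannLiouville (α + β) f t = riemannLiouville (α + β) g t := by
    simp only [riemannLiouville]
    congr 1
    apply intervalIntegral.integral_congr
    intro s hs
    rw [Set.uIcc_of_le ht] at hs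
    dsimp only
    rw [hfg s hs.1]
  rw [houter, hrhs]
  exact rl_main α β hα hβ g hgc ht
end

section
/- The derivative of a shifted Legendre polynomial on [0,1] is a linear combination of lower-order shifted Legendre polynomials with the operational-matrix coefficients: for every i ∈ ℕ and every x ∈ ℝ, P_i'(x) = ∑_{j=0, i+j odd}^{i-1} 2(2j+1) · P_j(x), where the sum runs over those j ∈ {0, 1, …, i-1} for which i - j is odd. -/
/-- The shifted Legendre polynomial on `[0,1]`:
`P_i(x) = ∑_{k=0}^{i} (-1)^(i+k) ((i+k)! / ((i-k)! (k!)^2)) x^k`. -/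
noncomputable def shiftedLegendre (i : ℕ) (x : ℝ) : ℝ :=
  ∑ k ∈ Finset.range (i + 1),
    (-1 : ℝ) ^ (i + k) *
      (((i + k).factorial : ℝ) / (((i - k).factorial : ℝ) * ((k.factorial : ℝ)) ^ 2)) * x ^ k

/-- coefficient -/
noncomputable def sLc (i k : ℕ) : ℝ :=
  (-1 : ℝ) ^ (i + k) *
      (((i + k).factorial : ℝ) / (((i - k).factorial : ℝ) * ((k.factorial : ℝ)) ^ 2))

lemma sL_eq (i : ℕ) (x : ℝ) :
    shiftedLegendre i x = ∑ k ∈ Finset.range (i + 1), sLc i k * x ^ k := rfl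

lemma deriv_sL (i : ℕ) (x : ℝ) :
    deriv (shiftedLegendre i) x
      = ∑ k ∈ Finset.range (i + 1), sLc i k * ((k : ℝ) * x ^ (k - 1)) := by
  have h : HasDerivAt (shiftedLegendre i)
      (∑ k ∈ Finset.range (i + 1), sLc i k * ((k : ℝ) * x ^ (k - 1))) x := by
    apply HasDerivAt.fun_sum
    intro k _
    exact (hasDerivAt_pow k x).const_mul (sLc i k)
  exact h.deriv

-- coefficient identity, middle range
lemma coef_mid (n k : ℕ) (hk : k < n) :
    sLc (n + 2) (k + 1) * ((k : ℝ) + 1)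
      = sLc n (k + 1) * ((k : ℝ) + 1) + 2 * (2 * ((n : ℝ) + 1) + 1) * sLc (n + 1) k := by
  obtain ⟨m, rfl⟩ : ∃ m, n = k + 1 + m := ⟨n - (k + 1), by omega⟩
  unfold sLc
  have e1 : k + 1 + m + 2 + (k + 1) = 2 * k + m + 2 + 1 + 1 := by ring
  have e2 : k + 1 + m + 2 - (k + 1) = m + 1 + 1 := by omega
  have e3 : k + 1 + m + (k + 1) = 2 * k + m + 2 := by ring
  have e4 : k + 1 + m - (k + 1) = m := by omega
  have e5 : k + 1 + m + 1 + k = 2 * k + m + 2 := by ring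
  have e6 : k + 1 + m + 1 - k = m + 1 + 1 := by omega
  rw [e1, e2, e3, e4, e5, e6]
  have hs1 : (-1 : ℝ) ^ (2 * k + m + 2 + 1 + 1) = (-1 : ℝ) ^ m := by
    rw [show 2 * k + m + 2 + 1 + 1 = m + 2 * (k + 2) from by ring, pow_add, pow_mul]
    simp
  have hs2 : (-1 : ℝ) ^ (2 * k + m + 2) = (-1 : ℝ) ^ m := by
    rw [show 2 * k + m + 2 = m + 2 * (k + 1) from by ring, pow_add, pow_mul]
    simp
  rw [hs1, hs2]
  have hf1 : ((2 * k + m + 2 + 1 + 1).factorial : ℝ)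
      = ((2 * k + m + 4 : ℕ) : ℝ) * ((2 * k + m + 3 : ℕ) : ℝ) * ((2 * k + m + 2).factorial : ℝ) := by
    rw [Nat.factorial_succ, Nat.factorial_succ]; push_cast; ring
  have hf2 : ((m + 1 + 1).factorial : ℝ)
      = ((m + 2 : ℕ) : ℝ) * ((m + 1 : ℕ) : ℝ) * ((m).factorial : ℝ) := by
    rw [Nat.factorial_succ, Nat.factorial_succ]; push_cast; ring
  have hf3 : (((k + 1)).factorial : ℝ) = ((k + 1 : ℕ) : ℝ) * ((k).factorial : ℝ) := by
    rw [Nat.factorial_succ]; push_cast; ring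
  rw [hf1, hf2, hf3]
  have p1 : ((2 * k + m + 2).factorial : ℝ) ≠ 0 := Nat.cast_ne_zero.2 (Nat.factorial_ne_zero _)
  have p2 : ((m).factorial : ℝ) ≠ 0 := Nat.cast_ne_zero.2 (Nat.factorial_ne_zero _)
  have p3 : ((k).factorial : ℝ) ≠ 0 := Nat.cast_ne_zero.2 (Nat.factorial_ne_zero _)
  push_cast
  field_simp
  ring

lemma coef_top1 (n : ℕ) :
    sLc (n + 2) (n + 1) * ((n : ℝ) + 1)
      = 2 * (2 * ((n : ℝ) + 1) + 1) * sLc (n + 1) n := by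
  unfold sLc
  have e1 : n + 2 + (n + 1) = 2 * n + 1 + 1 + 1 := by ring
  have e2 : n + 2 - (n + 1) = 1 := by omega
  have e3 : n + 1 + n = 2 * n + 1 := by ring
  have e4 : n + 1 - n = 1 := by omega
  rw [e1, e2, e3, e4]
  have hs1 : (-1 : ℝ) ^ (2 * n + 1 + 1 + 1) = -1 := by
    rw [show 2 * n + 1 + 1 + 1 = 1 + 2 * (n + 1) from by ring, pow_add, pow_mul]; simp
  have hs2 : (-1 : ℝ) ^ (2 * n + 1) = -1 := by
    rw [show 2 * n + 1 = 1 + 2 * n from by ring, pow_add, pow_mul]; simp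
  rw [hs1, hs2]
  have hf1 : ((2 * n + 1 + 1 + 1).factorial : ℝ)
      = ((2 * n + 3 : ℕ) : ℝ) * ((2 * n + 2 : ℕ) : ℝ) * ((2 * n + 1).factorial : ℝ) := by
    rw [Nat.factorial_succ, Nat.factorial_succ]; push_cast; ring
  have hf3 : (((n + 1)).factorial : ℝ) = ((n + 1 : ℕ) : ℝ) * ((n).factorial : ℝ) := by
    rw [Nat.factorial_succ]; push_cast; ring
  rw [hf1, hf3]
  have p1 : ((2 * n + 1).factorial : ℝ) ≠ 0 := Nat.cast_ne_zero.2 (Nat.factorial_ne_zero _)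
  have p3 : ((n).factorial : ℝ) ≠ 0 := Nat.cast_ne_zero.2 (Nat.factorial_ne_zero _)
  push_cast
  field_simp
  ring

lemma coef_top2 (n : ℕ) :
    sLc (n + 2) (n + 2) * ((n : ℝ) + 2)
      = 2 * (2 * ((n : ℝ) + 1) + 1) * sLc (n + 1) (n + 1) := by
  unfold sLc
  have e1 : n + 2 + (n + 2) = 2 * n + 2 + 1 + 1 := by ring
  have e2 : n + 2 - (n + 2) = 0 := by omega
  have e3 : n + 1 + (n + 1) = 2 * n + 2 := by ring
  have e4 : n + 1 - (n + 1) = 0 := by omega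
  rw [e1, e2, e3, e4]
  have hs1 : (-1 : ℝ) ^ (2 * n + 2 + 1 + 1) = 1 := by
    rw [show 2 * n + 2 + 1 + 1 = 2 * (n + 2) from by ring, pow_mul]; simp
  have hs2 : (-1 : ℝ) ^ (2 * n + 2) = 1 := by
    rw [show 2 * n + 2 = 2 * (n + 1) from by ring, pow_mul]; simp
  rw [hs1, hs2]
  have hf1 : ((2 * n + 2 + 1 + 1).factorial : ℝ)
      = ((2 * n + 4 : ℕ) : ℝ) * ((2 * n + 3 : ℕ) : ℝ) * ((2 * n + 2).factorial : ℝ) := by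
    rw [Nat.factorial_succ, Nat.factorial_succ]; push_cast; ring
  have hf3 : (((n + 2)).factorial : ℝ)
      = ((n + 2 : ℕ) : ℝ) * ((n + 1 : ℕ) : ℝ) * ((n).factorial : ℝ) := by
    rw [Nat.factorial_succ, Nat.factorial_succ]; push_cast; ring
  have hf4 : (((n + 1)).factorial : ℝ) = ((n + 1 : ℕ) : ℝ) * ((n).factorial : ℝ) := by
    rw [Nat.factorial_succ]; push_cast; ring
  rw [hf1, hf3, hf4]
  have p1 : ((2 * n + 2).factorial : ℝ) ≠ 0 := Nat.cast_ne_zero.2 (Nat.factorial_ne_zero _)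
  have p3 : ((n).factorial : ℝ) ≠ 0 := Nat.cast_ne_zero.2 (Nat.factorial_ne_zero _)
  push_cast
  field_simp
  ring

lemma sL_step (n : ℕ) (x : ℝ) :
    deriv (shiftedLegendre (n + 2)) x
      = deriv (shiftedLegendre n) x
        + 2 * (2 * ((n : ℝ) + 1) + 1) * shiftedLegendre (n + 1) x := by
  rw [deriv_sL, deriv_sL, sL_eq, Finset.mul_sum]
  rw [show n + 2 + 1 = (n + 2) + 1 from rfl, Finset.sum_range_succ' (fun k => sLc (n+2) k * ((k:ℝ) * x ^ (k-1))) (n+2)]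
  rw [Finset.sum_range_succ' (fun k => sLc n k * ((k:ℝ) * x ^ (k-1))) n]
  simp only [Nat.cast_zero, zero_mul, mul_zero, add_zero, Nat.cast_add, Nat.cast_one,
    Nat.add_sub_cancel]
  rw [Finset.sum_range_succ (fun k => sLc (n+2) (k+1) * (((k:ℝ)+1) * x ^ k)) (n+1)]
  rw [Finset.sum_range_succ (fun k => sLc (n+2) (k+1) * (((k:ℝ)+1) * x ^ k)) n]
  rw [Finset.sum_range_succ (fun k => 2 * (2 * ((n : ℝ) + 1) + 1) * (sLc (n+1) k * x ^ k)) (n+1)]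
  rw [Finset.sum_range_succ (fun k => 2 * (2 * ((n : ℝ) + 1) + 1) * (sLc (n+1) k * x ^ k)) n]
  have hmid : ∑ k ∈ Finset.range n, sLc (n+2) (k+1) * (((k:ℝ)+1) * x ^ k)
      = ∑ k ∈ Finset.range n, (sLc n (k+1) * (((k:ℝ)+1) * x ^ k)
          + 2 * (2 * ((n : ℝ) + 1) + 1) * (sLc (n+1) k * x ^ k)) := by
    apply Finset.sum_congr rfl
    intro k hk
    have := coef_mid n k (Finset.mem_range.1 hk)
    linear_combination x ^ k * this
  rw [hmid, Finset.sum_add_distrib]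
  have h1 := coef_top1 n
  have h2 := coef_top2 n
  push_cast
  linear_combination x ^ (n + 1) * h2 + x ^ n * h1

lemma filter_step (n : ℕ) :
    (Finset.range (n + 2)).filter (fun j => Odd (n + 2 + j))
      = insert (n + 1) ((Finset.range n).filter (fun j => Odd (n + j))) := by
  ext j
  simp only [Finset.mem_filter, Finset.mem_insert, Finset.mem_range, Nat.odd_iff]
  omega

theorem shiftedLegendre_deriv (i : ℕ) (x : ℝ) :
    deriv (shiftedLegendre i) x
      = ∑ j ∈ (Finset.range i).filter (fun j => Odd (i + j)),
          2 * (2 * (j : ℝ) + 1) * shiftedLegendre j x := by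
  induction i using Nat.twoStepInduction with
  | zero =>
    rw [deriv_sL]
    simp
  | one =>
    rw [deriv_sL]
    have : (Finset.range 1).filter (fun j => Odd (1 + j)) = {0} := by decide
    rw [this]
    simp [sLc, shiftedLegendre, Finset.sum_range_succ]
  | more n ih _ =>
    rw [sL_step n x, ih, filter_step, Finset.sum_insert (by simp)]
    push_cast
    ring
end
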